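/- Let a > 0. Suppose B_0 : ℕ → ℝ and, for each i ≥ 1, B_i : ℝ → ℝ are such that for every nonnegative integer n, every N > 0, and every real x, the polynomial y = C_n^{a,N} satisfies N B_0(n) y(x) + N ∑_{i=1}^{∞} B_i(x) Δ^i y(x) + x Δ∇y(x) + (a − x) Δy(x) + n y(x) = 0 (the sum is finite since Δ^i y = 0 for i > n). Then necessarily B_0(n) = (-1)^{n-1} C_{n-1}^{(a)}(-2) for all n, and B_i(x) = ∑_{k=1}^i (-1)^k C_{i-k}^{(-a)}(-x+1) [C_k^{(a)}(-1) C_k^{(a)}(x-2) − C_k^{(a)}(-2) C_k^{(a)}(x-1)] for all i ≥ 1 and all real x. -/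

import Mathlib

/-- Generalized binomial coefficient `x(x-1)⋯(x-k+1)/k!`. -/
noncomputable def genChoose (x : ℝ) (k : ℕ) : ℝ :=
  (∏ j ∈ Finset.range k, (x - (j : ℝ))) / (Nat.factorial k : ℝ)

/-- The Charlier polynomial `C_n^{(a)}(x) = ∑_{k=0}^n (x choose k) (-a)^{n-k}/(n-k)!`. -/
noncomputable def charlier (a : ℝ) (n : ℕ) (x : ℝ) : ℝ :=
  ∑ k ∈ Finset.range (n + 1),
    genChoose x k * (-a) ^ (n - k) / (Nat.factorial (n - k) : ℝ)

/-- Charlier polynomial with integer index, with the convention `C_{-1}^{(a)} ≡ 0`. -/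
noncomputable def charlierZ (a : ℝ) (n : ℤ) (x : ℝ) : ℝ :=
  if 0 ≤ n then charlier a n.toNat x else 0

/-- Forward difference operator `Δf(x) = f(x+1) - f(x)`. -/
def fdiff (f : ℝ → ℝ) : ℝ → ℝ := fun x => f (x + 1) - f x

/-- Backward difference operator `∇f(x) = f(x) - f(x-1)`. -/
def bdiff (f : ℝ → ℝ) : ℝ → ℝ := fun x => f x - f (x - 1)

/-- The generalized Charlier polynomial
`C_n^{a,N}(x) = [1 + N(-1)^n C_n^{(a)}(-1)] C_n^{(a)}(x) - N(-1)^n C_n^{(a)}(0) C_n^{(a)}(x-1)`. -/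
noncomputable def genCharlier (a N : ℝ) (n : ℕ) (x : ℝ) : ℝ :=
  (1 + N * (-1) ^ n * charlier a n (-1)) * charlier a n x
    - N * (-1) ^ n * charlier a n 0 * charlier a n (x - 1)

/-- The coefficient `A_i(x)` (for `i ≥ 1`) of the difference equation. -/
noncomputable def Acoef (a : ℝ) (i : ℕ) (x : ℝ) : ℝ :=
  ∑ k ∈ Finset.Icc 1 i, (-1 : ℝ) ^ k * charlier (-a) (i - k) (-x + 1) *
    (charlier a k (-1) * charlier a k (x - 2) - charlier a k (-2) * charlier a k (x - 1))

/-- The coefficient `A_0 = (-1)^{n-1} C_{n-1}^{(a)}(-2)` (with `C_{-1}^{(a)} ≡ 0`). -/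
noncomputable def A0coef (a : ℝ) (n : ℕ) : ℝ :=
  (-1 : ℝ) ^ ((n : ℤ) - 1) * charlierZ a ((n : ℤ) - 1) (-2)

open Finset

lemma genChoose_zero (x : ℝ) : genChoose x 0 = 1 := by
  simp [genChoose]

lemma genChoose_succ (x : ℝ) (k : ℕ) :
    genChoose x (k+1) = genChoose x k * (x - k) / (k+1) := by
  unfold genChoose
  rw [prod_range_succ, Nat.factorial_succ]
  have h1 : (Nat.factorial k : ℝ) ≠ 0 := Nat.cast_ne_zero.mpr (Nat.factorial_ne_zero k)
  have h2 : ((k:ℝ)+1) ≠ 0 := by positivity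
  push_cast
  field_simp
  try exact Or.inl trivial

lemma genChoose_pascal (x : ℝ) (k : ℕ) :
    genChoose (x+1) (k+1) = genChoose x (k+1) + genChoose x k := by
  induction k generalizing x with
  | zero => simp [genChoose_succ, genChoose_zero]
  | succ k ih =>
    rw [genChoose_succ (x+1), ih, genChoose_succ x (k+1), genChoose_succ x k]
    have h2 : ((k:ℝ)+1) ≠ 0 := by positivity
    have h3 : ((k:ℝ)+1+1) ≠ 0 := by positivity
    push_cast
    field_simp
    ring

lemma genChoose_absorb (x : ℝ) (k : ℕ) :
    x * genChoose (x-1) k = (k+1) * genChoose x (k+1) := by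
  have key : ∏ j ∈ Finset.range (k+1), (x - (j:ℝ)) = x * ∏ j ∈ Finset.range k, (x - 1 - (j:ℝ)) := by
    rw [prod_range_succ']
    push_cast
    rw [mul_comm]
    congr 1
    · norm_num
    · exact prod_congr rfl fun j _ => by ring
  unfold genChoose
  rw [key, Nat.factorial_succ]
  have h1 : (Nat.factorial k : ℝ) ≠ 0 := Nat.cast_ne_zero.mpr (Nat.factorial_ne_zero k)
  have h2 : ((k:ℝ)+1) ≠ 0 := by positivity
  push_cast
  field_simp

lemma genChoose_zero_arg (k : ℕ) : genChoose 0 (k+1) = 0 := by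
  unfold genChoose
  rw [prod_range_succ']
  simp

lemma charlier_zero (b x : ℝ) : charlier b 0 x = 1 := by
  simp [charlier, genChoose_zero]

lemma charlier_at_zero (b : ℝ) (n : ℕ) : charlier b n 0 = (-b)^n / n.factorial := by
  unfold charlier
  rw [Finset.sum_eq_single 0]
  · simp [genChoose_zero]
  · intro k hk hk0
    obtain ⟨k', rfl⟩ := Nat.exists_eq_succ_of_ne_zero hk0
    rw [genChoose_zero_arg]
    ring
  · intro hk; simp at hk

lemma charlier_pascal (b : ℝ) (n : ℕ) (x : ℝ) :
    charlier b (n+1) (x+1) = charlier b (n+1) x + charlier b n x := by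
  unfold charlier
  rw [Finset.sum_range_succ' (fun k => genChoose (x+1) k * (-b) ^ (n+1-k) / (Nat.factorial (n+1-k) : ℝ)),
      Finset.sum_range_succ' (fun k => genChoose x k * (-b) ^ (n+1-k) / (Nat.factorial (n+1-k) : ℝ))]
  have : ∀ k ∈ Finset.range (n+1),
      genChoose (x+1) (k+1) * (-b) ^ (n+1-(k+1)) / (Nat.factorial (n+1-(k+1)) : ℝ)
      = genChoose x (k+1) * (-b) ^ (n+1-(k+1)) / (Nat.factorial (n+1-(k+1)) : ℝ)
        + genChoose x k * (-b) ^ (n-k) / (Nat.factorial (n-k) : ℝ) := by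
    intro k hk
    rw [genChoose_pascal]
    have : n + 1 - (k+1) = n - k := by omega
    rw [this]
    ring
  rw [Finset.sum_congr rfl this, Finset.sum_add_distrib]
  simp [genChoose_zero]
  ring

lemma charlier_rec (b : ℝ) (n : ℕ) (x : ℝ) :
    ((n:ℝ)+1) * charlier b (n+1) x = -b * charlier b n x + x * charlier b n (x-1) := by
  unfold charlier
  rw [Finset.mul_sum, Finset.mul_sum, Finset.mul_sum]
  rw [Finset.sum_range_succ' (fun k => ((n:ℝ)+1) * (genChoose x k * (-b) ^ (n+1-k) / (Nat.factorial (n+1-k) : ℝ)))]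
  rw [Finset.sum_range_succ' (fun k => -b * (genChoose x k * (-b) ^ (n-k) / (Nat.factorial (n-k) : ℝ)))]
  have key : ∀ k ∈ Finset.range (n+1),
      ((n:ℝ)+1) * (genChoose x (k+1) * (-b) ^ (n+1-(k+1)) / (Nat.factorial (n+1-(k+1)) : ℝ))
      = x * (genChoose (x-1) k * (-b) ^ (n-k) / (Nat.factorial (n-k) : ℝ))
        + (if k = n then 0 else
            -b * (genChoose x (k+1) * (-b) ^ (n-(k+1)) / (Nat.factorial (n-(k+1)) : ℝ))) := by
    intro k hk
    rw [Finset.mem_range] at hk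
    have hs : n + 1 - (k+1) = n - k := by omega
    rw [hs]
    have habs : x * genChoose (x-1) k = ((k:ℝ)+1) * genChoose x (k+1) := genChoose_absorb x k
    by_cases hkn : k = n
    · subst hkn
      rw [if_pos rfl]
      simp only [Nat.sub_self, pow_zero, Nat.factorial_zero, Nat.cast_one]
      linear_combination (-1 : ℝ) * habs
    · rw [if_neg hkn]
      obtain ⟨m, rfl⟩ : ∃ m, n = k + 1 + m := ⟨n - (k+1), by omega⟩
      have h1 : k+1+m - (k+1) = m := by omega
      have h2 : k+1+m - k = m + 1 := by omega
      rw [h1, h2, Nat.factorial_succ, pow_succ]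
      have hf : (Nat.factorial m : ℝ) ≠ 0 := Nat.cast_ne_zero.mpr (Nat.factorial_ne_zero _)
      have hm1 : ((m:ℝ)+1) ≠ 0 := by positivity
      push_cast
      field_simp
      linear_combination ((-b)^m * b) * habs
  rw [Finset.sum_congr rfl key, Finset.sum_add_distrib]
  have hite : ∑ k ∈ Finset.range (n+1), (if k = n then 0 else
      -b * (genChoose x (k+1) * (-b) ^ (n-(k+1)) / (Nat.factorial (n-(k+1)) : ℝ)))
      = ∑ k ∈ Finset.range n,
      -b * (genChoose x (k+1) * (-b) ^ (n-(k+1)) / (Nat.factorial (n-(k+1)) : ℝ)) := by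
    rw [Finset.sum_range_succ, if_pos rfl, add_zero]
    refine Finset.sum_congr rfl fun k hk => ?_
    rw [Finset.mem_range] at hk
    rw [if_neg (by omega)]
  rw [hite]
  have hlast : ((n:ℝ)+1) * (genChoose x 0 * (-b) ^ (n+1-0) / (Nat.factorial (n+1-0) : ℝ))
      = -b * (genChoose x 0 * (-b) ^ (n-0) / (Nat.factorial (n-0) : ℝ)) := by
    simp only [Nat.sub_zero, Nat.factorial_succ, genChoose_zero]
    have hf : (Nat.factorial n : ℝ) ≠ 0 := Nat.cast_ne_zero.mpr (Nat.factorial_ne_zero _)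
    have hm1 : ((n:ℝ)+1) ≠ 0 := by positivity
    push_cast
    rw [pow_succ]
    field_simp
  rw [hlast]
  ring

/-- Charlier difference equation. -/
lemma charlier_de (b : ℝ) (n : ℕ) (x : ℝ) :
    b * charlier b n (x+1) - (b+x) * charlier b n x + x * charlier b n (x-1)
      + (n:ℝ) * charlier b n x = 0 := by
  cases n with
  | zero => simp only [charlier_zero, Nat.cast_zero]; ring
  | succ n =>
    have P1 := charlier_pascal b n x
    have P2 := charlier_pascal b n (x-1)
    rw [sub_add_cancel] at P2
    have R := charlier_rec b n x
    push_cast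
    linear_combination b * P1 - x * P2 + R

/-- The convolution `E m x = ∑ C_l^{(-a)}(-x) C_{m-l}^{(a)}(x)`. -/
noncomputable def Econv (a : ℝ) (m : ℕ) (x : ℝ) : ℝ :=
  ∑ l ∈ Finset.range (m+1), charlier (-a) l (-x) * charlier a (m-l) x

lemma Econv_step (a : ℝ) (m : ℕ) (x : ℝ) :
    Econv a (m+1) (x+1) = Econv a (m+1) x := by
  unfold Econv
  -- split last term on LHS
  rw [Finset.sum_range_succ (fun l => charlier (-a) l (-(x+1)) * charlier a (m+1-l) (x+1))]
  have hsplit : ∀ l ∈ Finset.range (m+1),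
      charlier (-a) l (-(x+1)) * charlier a (m+1-l) (x+1)
      = charlier (-a) l (-(x+1)) * charlier a (m+1-l) x
        + charlier (-a) l (-(x+1)) * charlier a (m-l) x := by
    intro l hl
    rw [Finset.mem_range] at hl
    obtain ⟨j, hj⟩ : ∃ j, m - l = j := ⟨m - l, rfl⟩
    have h1 : m + 1 - l = j + 1 := by omega
    rw [h1, hj, charlier_pascal]
    ring
  rw [Finset.sum_congr rfl hsplit, Finset.sum_add_distrib]
  -- U := ∑_{l ∈ range(m+2)} g l (-(x+1)) * f (m+1-l) x
  have hU : (∑ l ∈ Finset.range (m+1), charlier (-a) l (-(x+1)) * charlier a (m+1-l) x)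
      + charlier (-a) (m+1) (-(x+1)) * charlier a (m+1-(m+1)) (x+1)
      = ∑ l ∈ Finset.range (m+2), charlier (-a) l (-(x+1)) * charlier a (m+1-l) x := by
    conv_rhs => rw [Finset.sum_range_succ]
    rw [Nat.sub_self, charlier_zero, charlier_zero]
  rw [add_right_comm, hU]
  -- now apply g-relation: g l (-(x+1)) = g l (-x) - g (l-1) (-(x+1)) for l ≥ 1
  have hg : ∀ l ∈ Finset.range (m+2),
      charlier (-a) l (-(x+1)) * charlier a (m+1-l) x
      = charlier (-a) l (-x) * charlier a (m+1-l) x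
        - (if l = 0 then 0 else charlier (-a) (l-1) (-(x+1)) * charlier a (m+1-l) x) := by
    intro l _
    cases l with
    | zero => rw [if_pos rfl, charlier_zero, charlier_zero]; ring
    | succ l' =>
      have := charlier_pascal (-a) l' (-(x+1))
      have hx : -(x+1) + 1 = -x := by ring
      rw [hx] at this
      rw [if_neg (Nat.succ_ne_zero l')]
      simp only [Nat.add_sub_cancel]
      linear_combination (- charlier a (m+1-(l'+1)) x) * this
  rw [Finset.sum_congr rfl hg, Finset.sum_sub_distrib]
  have hshift : ∑ l ∈ Finset.range (m+2),
      (if l = 0 then 0 else charlier (-a) (l-1) (-(x+1)) * charlier a (m+1-l) x)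
      = ∑ l ∈ Finset.range (m+1), charlier (-a) l (-(x+1)) * charlier a (m-l) x := by
    rw [Finset.sum_range_succ' (fun l => if l = 0 then 0 else charlier (-a) (l-1) (-(x+1)) * charlier a (m+1-l) x)]
    have hterm : ∀ l ∈ Finset.range (m+1),
        (if l+1 = 0 then 0 else charlier (-a) (l+1-1) (-(x+1)) * charlier a (m+1-(l+1)) x)
        = charlier (-a) l (-(x+1)) * charlier a (m-l) x := by
      intro l _
      rw [if_neg (Nat.succ_ne_zero l)]
      simp only [Nat.succ_sub_succ_eq_sub, Nat.succ_sub_one, Nat.sub_zero]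
    rw [Finset.sum_congr rfl hterm, if_pos rfl, add_zero]
  rw [hshift]
  ring

lemma Econv_at_zero (a : ℝ) (m : ℕ) : Econv a m 0 = if m = 0 then 1 else 0 := by
  unfold Econv
  have hterm : ∀ l ∈ Finset.range (m+1),
      charlier (-a) l (-(0:ℝ)) * charlier a (m-l) 0
      = (m.choose l : ℝ) * a ^ l * (-a) ^ (m-l) / (m.factorial : ℝ) := by
    intro l hl
    rw [Finset.mem_range] at hl
    rw [neg_zero, charlier_at_zero, charlier_at_zero]
    have h1 : (Nat.factorial l : ℝ) * (Nat.factorial (m-l) : ℝ) * (m.choose l : ℝ)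
        = (m.factorial : ℝ) := by
      rw [← Nat.cast_mul, ← Nat.cast_mul]
      norm_cast
      rw [← Nat.choose_mul_factorial_mul_factorial (show l ≤ m by omega)]
      ring
    have hl1 : (Nat.factorial l : ℝ) ≠ 0 := Nat.cast_ne_zero.mpr (Nat.factorial_ne_zero _)
    have hl2 : (Nat.factorial (m-l) : ℝ) ≠ 0 := Nat.cast_ne_zero.mpr (Nat.factorial_ne_zero _)
    have hl3 : (Nat.factorial m : ℝ) ≠ 0 := Nat.cast_ne_zero.mpr (Nat.factorial_ne_zero _)
    have hna : (-(-a)) = a := by ring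
    rw [hna]
    field_simp
    linear_combination (-(a ^ l * (-a)^(m-l))) * h1
  rw [Finset.sum_congr rfl hterm]
  have : ∑ l ∈ Finset.range (m+1), (m.choose l : ℝ) * a ^ l * (-a) ^ (m-l) / (m.factorial : ℝ)
      = (a + (-a))^m / (m.factorial : ℝ) := by
    rw [add_pow]
    rw [Finset.sum_div]
    refine Finset.sum_congr rfl fun l _ => ?_
    ring
  rw [this]
  cases m with
  | zero => norm_num
  | succ m => rw [if_neg (Nat.succ_ne_zero m)]; rw [add_neg_cancel, zero_pow (Nat.succ_ne_zero m), zero_div]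

lemma Econv_at_nat (a : ℝ) (m : ℕ) (k : ℕ) : Econv a (m+1) (k : ℝ) = 0 := by
  induction k with
  | zero =>
    have := Econv_at_zero a (m+1)
    rw [if_neg (Nat.succ_ne_zero m)] at this
    simpa using this
  | succ k ih =>
    have := Econv_step a m (k : ℝ)
    push_cast
    rw [this]
    exact ih

open Polynomial in
noncomputable def charlierPoly (b : ℝ) (n : ℕ) : Polynomial ℝ :=
  ∑ k ∈ Finset.range (n+1),
    Polynomial.C ((-b)^(n-k) / ((Nat.factorial (n-k) : ℝ) * (Nat.factorial k : ℝ)))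
      * ∏ j ∈ Finset.range k, (Polynomial.X - Polynomial.C (j : ℝ))

lemma charlierPoly_eval (b : ℝ) (n : ℕ) (x : ℝ) :
    (charlierPoly b n).eval x = charlier b n x := by
  unfold charlierPoly charlier
  rw [Polynomial.eval_finset_sum]
  refine Finset.sum_congr rfl fun k _ => ?_
  rw [Polynomial.eval_mul, Polynomial.eval_C, Polynomial.eval_prod]
  have : ∏ j ∈ Finset.range k, ((Polynomial.X - Polynomial.C (j:ℝ)).eval x)
      = ∏ j ∈ Finset.range k, (x - (j:ℝ)) := by
    refine Finset.prod_congr rfl fun j _ => ?_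
    simp
  rw [this]
  unfold genChoose
  have hl1 : (Nat.factorial k : ℝ) ≠ 0 := Nat.cast_ne_zero.mpr (Nat.factorial_ne_zero _)
  have hl2 : (Nat.factorial (n-k) : ℝ) ≠ 0 := Nat.cast_ne_zero.mpr (Nat.factorial_ne_zero _)
  field_simp

noncomputable def EconvPoly (a : ℝ) (m : ℕ) : Polynomial ℝ :=
  ∑ l ∈ Finset.range (m+1),
    (charlierPoly (-a) l).comp (-Polynomial.X) * charlierPoly a (m-l)

lemma EconvPoly_eval (a : ℝ) (m : ℕ) (x : ℝ) :
    (EconvPoly a m).eval x = Econv a m x := by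
  unfold EconvPoly Econv
  rw [Polynomial.eval_finset_sum]
  refine Finset.sum_congr rfl fun l _ => ?_
  rw [Polynomial.eval_mul, Polynomial.eval_comp, Polynomial.eval_neg, Polynomial.eval_X,
    charlierPoly_eval, charlierPoly_eval]

/-- MASTER identity: the convolution vanishes identically for `m ≥ 1`. -/
lemma Econv_eq_zero (a : ℝ) (m : ℕ) (x : ℝ) : Econv a (m+1) x = 0 := by
  have hpoly : EconvPoly a (m+1) = 0 := by
    apply Polynomial.eq_zero_of_infinite_isRoot
    apply Set.Infinite.mono (s := Set.range (fun k : ℕ => (k : ℝ)))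
    · rintro y ⟨k, rfl⟩
      show Polynomial.eval _ _ = 0
      rw [EconvPoly_eval]
      exact Econv_at_nat a m k
    · exact Set.infinite_range_of_injective Nat.cast_injective
  have := EconvPoly_eval a (m+1) x
  rw [hpoly] at this
  simpa using this.symm

lemma Econv_zero' (a x : ℝ) : Econv a 0 x = 1 := by
  unfold Econv
  simp [charlier_zero]

/-- Pascal relation in shifted form. -/
lemma charlier_pascal' (b : ℝ) (n : ℕ) (x : ℝ) :
    charlier b (n+1) x = charlier b (n+1) (x-1) + charlier b n (x-1) := by
  have := charlier_pascal b n (x-1)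
  rw [sub_add_cancel] at this
  exact this

/-- Convolution value (C2). -/
lemma conv2 (a x : ℝ) (m : ℕ) :
    ∑ l ∈ Finset.range (m+1), charlier (-a) l (-x+1) * charlier a (m-l) (x-1)
      = if m = 0 then 1 else 0 := by
  have harg : ∀ l, charlier (-a) l (-x+1) = charlier (-a) l (-(x-1)) := by
    intro l; rw [show -x+1 = -(x-1) by ring]
  have : ∑ l ∈ Finset.range (m+1), charlier (-a) l (-x+1) * charlier a (m-l) (x-1)
      = Econv a m (x-1) := by
    unfold Econv
    exact Finset.sum_congr rfl fun l _ => by rw [harg]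
  rw [this]
  cases m with
  | zero => rw [if_pos rfl, Econv_zero']
  | succ m => rw [if_neg (Nat.succ_ne_zero m), Econv_eq_zero]

/-- Convolution value (C1). -/
lemma conv1 (a x : ℝ) (m : ℕ) :
    ∑ l ∈ Finset.range (m+1), charlier (-a) l (-x+1) * charlier a (m-l) x
      = if m ≤ 1 then 1 else 0 := by
  cases m with
  | zero => simp [charlier_zero]
  | succ m =>
    rw [Finset.sum_range_succ]
    have hsplit : ∀ l ∈ Finset.range (m+1),
        charlier (-a) l (-x+1) * charlier a (m+1-l) x
        = charlier (-a) l (-x+1) * charlier a (m+1-l) (x-1)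
          + charlier (-a) l (-x+1) * charlier a (m-l) (x-1) := by
      intro l hl
      rw [Finset.mem_range] at hl
      obtain ⟨j, hj⟩ : ∃ j, m - l = j := ⟨m - l, rfl⟩
      have h1 : m + 1 - l = j + 1 := by omega
      rw [h1, hj, charlier_pascal' a j x]
      ring
    rw [Finset.sum_congr rfl hsplit, Finset.sum_add_distrib]
    have e1 : (∑ l ∈ Finset.range (m+1), charlier (-a) l (-x+1) * charlier a (m+1-l) (x-1))
        + charlier (-a) (m+1) (-x+1) * charlier a (m+1-(m+1)) x
        = ∑ l ∈ Finset.range (m+2), charlier (-a) l (-x+1) * charlier a (m+1-l) (x-1) := by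
      conv_rhs => rw [Finset.sum_range_succ]
      rw [Nat.sub_self, charlier_zero, charlier_zero]
    have e2 := conv2 a x (m+1)
    rw [if_neg (Nat.succ_ne_zero m)] at e2
    have e3 := conv2 a x m
    calc (∑ l ∈ Finset.range (m+1), charlier (-a) l (-x+1) * charlier a (m+1-l) (x-1))
          + (∑ l ∈ Finset.range (m+1), charlier (-a) l (-x+1) * charlier a (m-l) (x-1))
          + charlier (-a) (m+1) (-x+1) * charlier a (m+1-(m+1)) x
        = (∑ l ∈ Finset.range (m+2), charlier (-a) l (-x+1) * charlier a (m+1-l) (x-1))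
          + (∑ l ∈ Finset.range (m+1), charlier (-a) l (-x+1) * charlier a (m-l) (x-1)) := by
          rw [← e1]; ring
      _ = 0 + (if m = 0 then 1 else 0) := by rw [e2, e3]
      _ = if m + 1 ≤ 1 then 1 else 0 := by
          cases m with
          | zero => norm_num
          | succ m => norm_num

/-- w_n(x). -/
noncomputable def wfun (a : ℝ) (n : ℕ) (x : ℝ) : ℝ :=
  charlier a n (-1) * charlier a n (x-2) - charlier a n (-2) * charlier a n (x-1)

lemma wfun_zero (a x : ℝ) : wfun a 0 x = 0 := by
  unfold wfun
  rw [charlier_zero, charlier_zero, charlier_zero, charlier_zero]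
  ring

/-- The key identity (⋆). -/
lemma star_id (a : ℝ) (n : ℕ) (x : ℝ) :
    wfun a (n+1) x - wfun a n x
      = charlier a n (-2) * charlier a (n+1) x - charlier a (n+1) 0 * charlier a n (x-2) := by
  have P : charlier a (n+1) (x-1) = charlier a (n+1) (x-2) + charlier a n (x-2) := by
    have := charlier_pascal' a n (x-1)
    rw [show x-1-1 = x-2 by ring] at this
    exact this
  have Q : charlier a (n+1) (-1) = charlier a (n+1) (-2) + charlier a n (-2) := by
    have := charlier_pascal' a n (-1)
    rw [show (-1:ℝ)-1 = -2 by norm_num] at this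
    exact this
  have R : charlier a (n+1) x = charlier a (n+1) (x-1) + charlier a n (x-1) :=
    charlier_pascal' a n x
  have S : charlier a (n+1) 0 = charlier a (n+1) (-1) + charlier a n (-1) := by
    have := charlier_pascal' a n 0
    rw [show (0:ℝ)-1 = -1 by norm_num] at this
    exact this
  unfold wfun
  rw [R, S, Q, P]
  ring

/-- The bracket identity. -/
lemma brak_id (a : ℝ) (n : ℕ) (x : ℝ) :
    charlier a (n+1) (-1) * charlier a n (x-2) + wfun a (n+1) x
      - charlier a n (-2) * charlier a (n+1) (x-1) = 0 := by
  have P : charlier a (n+1) (x-1) = charlier a (n+1) (x-2) + charlier a n (x-2) := by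
    have := charlier_pascal' a n (x-1)
    rw [show x-1-1 = x-2 by ring] at this
    exact this
  have Q : charlier a (n+1) (-1) = charlier a (n+1) (-2) + charlier a n (-2) := by
    have := charlier_pascal' a n (-1)
    rw [show (-1:ℝ)-1 = -2 by norm_num] at this
    exact this
  unfold wfun
  rw [P, Q]
  ring

lemma A0coef_zero (a : ℝ) : A0coef a 0 = 0 := by
  unfold A0coef charlierZ
  norm_num

lemma A0coef_succ (a : ℝ) (n : ℕ) : A0coef a (n+1) = (-1:ℝ)^n * charlier a n (-2) := by
  unfold A0coef charlierZ
  have h1 : ((n:ℤ)+1) - 1 = (n:ℤ) := by ring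
  push_cast
  rw [h1]
  rw [if_pos (Int.natCast_nonneg n)]
  rw [Int.toNat_natCast]
  rw [zpow_natCast]

lemma tri_swap (F : ℕ → ℕ → ℝ) (n : ℕ) :
    ∑ i ∈ Finset.range n, ∑ j ∈ Finset.range (i+1), F j (i-j)
      = ∑ j ∈ Finset.range n, ∑ l ∈ Finset.range (n-j), F j l := by
  induction n with
  | zero => simp
  | succ n ih =>
    rw [Finset.sum_range_succ, ih]
    have hterm : ∀ j ∈ Finset.range (n+1),
        ∑ l ∈ Finset.range (n+1-j), F j l
        = (∑ l ∈ Finset.range (n-j), F j l) + F j (n-j) := by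
      intro j hj
      rw [Finset.mem_range] at hj
      rw [show n+1-j = (n-j)+1 by omega, Finset.sum_range_succ]
    rw [Finset.sum_congr rfl hterm, Finset.sum_add_distrib]
    congr 1
    rw [Finset.sum_range_succ, Nat.sub_self]
    simp

lemma Acoef_succ_eq (a : ℝ) (i : ℕ) (x : ℝ) :
    Acoef a (i+1) x
      = ∑ j ∈ Finset.range (i+1), (-1:ℝ)^(1+j) * charlier (-a) (i-j) (-x+1) * wfun a (1+j) x := by
  unfold Acoef
  rw [show Finset.Icc 1 (i+1) = Finset.Ico 1 (i+2) by ext j; simp only [Finset.mem_Icc, Finset.mem_Ico]; omega,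
    Finset.sum_Ico_eq_sum_range, show i+2-1 = i+1 from rfl]
  refine Finset.sum_congr rfl fun j hj => ?_
  rw [Finset.mem_range] at hj
  unfold wfun
  have : i + 1 - (1+j) = i - j := by omega
  rw [this]

/-- Sum lemma 2. -/
lemma SL2 (a x : ℝ) (n : ℕ) :
    ∑ i ∈ Finset.range (n+1), Acoef a (i+1) x * charlier a (n-i) (x-1)
      = (-1:ℝ)^(n+1) * wfun a (n+1) x := by
  have step1 : ∀ i ∈ Finset.range (n+1),
      Acoef a (i+1) x * charlier a (n-i) (x-1)
      = ∑ j ∈ Finset.range (i+1),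
          (-1:ℝ)^(1+j) * wfun a (1+j) x * (charlier (-a) (i-j) (-x+1) * charlier a (n-j-(i-j)) (x-1)) := by
    intro i hi
    rw [Finset.mem_range] at hi
    rw [Acoef_succ_eq, Finset.sum_mul]
    refine Finset.sum_congr rfl fun j hj => ?_
    rw [Finset.mem_range] at hj
    have : n - j - (i-j) = n - i := by omega
    rw [this]
    ring
  rw [Finset.sum_congr rfl step1]
  have T := tri_swap (fun j l => (-1:ℝ)^(1+j) * wfun a (1+j) x * (charlier (-a) l (-x+1) * charlier a (n-j-l) (x-1))) (n+1)
  rw [T]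
  have step2 : ∀ j ∈ Finset.range (n+1),
      ∑ l ∈ Finset.range (n+1-j),
        (-1:ℝ)^(1+j) * wfun a (1+j) x * (charlier (-a) l (-x+1) * charlier a (n-j-l) (x-1))
      = (-1:ℝ)^(1+j) * wfun a (1+j) x * (if n - j = 0 then 1 else 0) := by
    intro j hj
    rw [Finset.mem_range] at hj
    rw [← Finset.mul_sum]
    congr 1
    rw [show n+1-j = (n-j)+1 by omega]
    exact conv2 a x (n-j)
  rw [Finset.sum_congr rfl step2]
  rw [Finset.sum_eq_single n]
  · rw [Nat.sub_self, if_pos rfl, mul_one, add_comm 1 n]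
  · intro j hj hjn
    rw [Finset.mem_range] at hj
    rw [if_neg (by omega), mul_zero]
  · intro hn
    exact absurd (Finset.self_mem_range_succ n) hn

/-- Sum lemma 1. -/
lemma SL1 (a x : ℝ) (n : ℕ) :
    ∑ i ∈ Finset.range (n+1), Acoef a (i+1) x * charlier a (n-i) x
      = (-1:ℝ)^(n+1) * wfun a (n+1) x + (-1:ℝ)^n * wfun a n x := by
  have step1 : ∀ i ∈ Finset.range (n+1),
      Acoef a (i+1) x * charlier a (n-i) x
      = ∑ j ∈ Finset.range (i+1),
          (-1:ℝ)^(1+j) * wfun a (1+j) x * (charlier (-a) (i-j) (-x+1) * charlier a (n-j-(i-j)) x) := by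
    intro i hi
    rw [Finset.mem_range] at hi
    rw [Acoef_succ_eq, Finset.sum_mul]
    refine Finset.sum_congr rfl fun j hj => ?_
    rw [Finset.mem_range] at hj
    have : n - j - (i-j) = n - i := by omega
    rw [this]
    ring
  rw [Finset.sum_congr rfl step1]
  have T := tri_swap (fun j l => (-1:ℝ)^(1+j) * wfun a (1+j) x * (charlier (-a) l (-x+1) * charlier a (n-j-l) x)) (n+1)
  rw [T]
  have step2 : ∀ j ∈ Finset.range (n+1),
      ∑ l ∈ Finset.range (n+1-j),
        (-1:ℝ)^(1+j) * wfun a (1+j) x * (charlier (-a) l (-x+1) * charlier a (n-j-l) x)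
      = (-1:ℝ)^(1+j) * wfun a (1+j) x * (if n - j ≤ 1 then 1 else 0) := by
    intro j hj
    rw [Finset.mem_range] at hj
    rw [← Finset.mul_sum]
    congr 1
    rw [show n+1-j = (n-j)+1 by omega]
    exact conv1 a x (n-j)
  rw [Finset.sum_congr rfl step2]
  cases n with
  | zero =>
    norm_num [wfun_zero]
  | succ n =>
    rw [Finset.sum_range_succ, Finset.sum_range_succ]
    have hzero : ∀ j ∈ Finset.range n,
        (-1:ℝ)^(1+j) * wfun a (1+j) x * (if n + 1 - j ≤ 1 then 1 else 0) = 0 := by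
      intro j hj
      rw [Finset.mem_range] at hj
      rw [if_neg (by omega), mul_zero]
    rw [Finset.sum_eq_zero hzero, zero_add]
    rw [if_pos (by omega), if_pos (by omega)]
    rw [show 1 + n = n + 1 by ring, show 1 + (n+1) = n+1+1 by ring]
    ring

/-- Identity (II). -/
lemma id2 (a : ℝ) (n : ℕ) (x : ℝ) :
    A0coef a (n+1) * charlier a (n+1) x
      + (∑ i ∈ Finset.range (n+1), Acoef a (i+1) x * charlier a (n-i) x)
      + (-1:ℝ)^(n+1) * charlier a (n+1) 0 * charlier a n (x-2) = 0 := by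
  rw [A0coef_succ, SL1]
  linear_combination ((-1:ℝ)^(n+1)) * star_id a n x

/-- Identity (I). -/
lemma id1 (a : ℝ) (n : ℕ) (x : ℝ) :
    A0coef a (n+1) * ((-1:ℝ)^(n+1) * charlier a (n+1) (-1) * charlier a (n+1) x
        - (-1:ℝ)^(n+1) * charlier a (n+1) 0 * charlier a (n+1) (x-1))
      + ∑ i ∈ Finset.range (n+1), Acoef a (i+1) x *
          ((-1:ℝ)^(n+1) * charlier a (n+1) (-1) * charlier a (n-i) x
            - (-1:ℝ)^(n+1) * charlier a (n+1) 0 * charlier a (n-i) (x-1)) = 0 := by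
  have hsplit : ∑ i ∈ Finset.range (n+1), Acoef a (i+1) x *
          ((-1:ℝ)^(n+1) * charlier a (n+1) (-1) * charlier a (n-i) x
            - (-1:ℝ)^(n+1) * charlier a (n+1) 0 * charlier a (n-i) (x-1))
      = (-1:ℝ)^(n+1) * charlier a (n+1) (-1) *
          (∑ i ∈ Finset.range (n+1), Acoef a (i+1) x * charlier a (n-i) x)
        - (-1:ℝ)^(n+1) * charlier a (n+1) 0 *
          (∑ i ∈ Finset.range (n+1), Acoef a (i+1) x * charlier a (n-i) (x-1)) := by
    rw [Finset.mul_sum, Finset.mul_sum, ← Finset.sum_sub_distrib]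
    exact Finset.sum_congr rfl fun i _ => by ring
  rw [hsplit, SL1, SL2, A0coef_succ]
  linear_combination ((-1:ℝ)^n * (-1:ℝ)^n * charlier a (n+1) (-1)) * star_id a n x
    - ((-1:ℝ)^n * (-1:ℝ)^n * charlier a (n+1) 0) * brak_id a n x

noncomputable def psiFun (a c d : ℝ) (m : ℕ) : ℝ → ℝ :=
  fun x => c * charlier a m x - d * charlier a m (x-1)

lemma fdiff_psi_succ (a c d : ℝ) (m : ℕ) :
    fdiff (psiFun a c d (m+1)) = psiFun a c d m := by
  funext x
  show psiFun a c d (m+1) (x+1) - psiFun a c d (m+1) x = psiFun a c d m x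
  unfold psiFun
  have P1 := charlier_pascal a m x
  have P2 := charlier_pascal' a m x
  rw [show x+1-1 = x by ring]
  linear_combination c * P1 - d * P2

lemma fdiff_psi_zero (a c d : ℝ) :
    fdiff (psiFun a c d 0) = fun _ => 0 := by
  funext x
  show psiFun a c d 0 (x+1) - psiFun a c d 0 x = 0
  unfold psiFun
  rw [charlier_zero, charlier_zero, charlier_zero, charlier_zero]
  ring

lemma fdiff_zero_fun : fdiff (fun _ : ℝ => (0:ℝ)) = fun _ => 0 := by
  funext x
  show (0:ℝ) - 0 = 0
  ring

lemma fdiff_iter_zero (j : ℕ) : fdiff^[j] (fun _ : ℝ => (0:ℝ)) = fun _ => 0 := by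
  induction j with
  | zero => rfl
  | succ j ih => rw [Function.iterate_succ_apply, fdiff_zero_fun, ih]

lemma fdiff_iter_psi (a c d : ℝ) (i m : ℕ) :
    fdiff^[i] (psiFun a c d (m+i)) = psiFun a c d m := by
  induction i with
  | zero => rfl
  | succ i ih =>
    rw [Function.iterate_succ_apply, show m+(i+1) = (m+i)+1 from rfl, fdiff_psi_succ, ih]

lemma fdiff_iter_psi_zero (a c d : ℝ) (j : ℕ) :
    fdiff^[j+1] (psiFun a c d 0) = fun _ => 0 := by
  rw [Function.iterate_succ_apply, fdiff_psi_zero, fdiff_iter_zero]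

lemma genCharlier_eq_psi (a N : ℝ) (n : ℕ) :
    genCharlier a N n
      = psiFun a (1 + N * (-1)^n * charlier a n (-1)) (N * (-1)^n * charlier a n 0) n := by
  funext x
  unfold genCharlier psiFun
  ring

/-- value of the second-order part on the generalized Charlier polynomial. -/
lemma L0_genCharlier (a N : ℝ) (n : ℕ) (x : ℝ) :
    x * fdiff (bdiff (genCharlier a N (n+1))) x
      + (a - x) * fdiff (genCharlier a N (n+1)) x
      + ((n:ℝ)+1+1-1) * genCharlier a N (n+1) x
      = N * ((-1:ℝ)^(n+1) * charlier a (n+1) 0 * charlier a n (x-2)) := by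
  have D1 := charlier_de a (n+1) x
  have D2 := charlier_de a (n+1) (x-1)
  rw [show x-1+1 = x by ring, show x-1-1 = x-2 by ring] at D2
  have P := charlier_pascal' a n (x-1)
  rw [show x-1-1 = x-2 by ring] at P
  push_cast at D1 D2
  simp only [fdiff, bdiff, genCharlier]
  rw [show x+1-1 = x by ring, show x-1-1 = x-2 by ring]
  linear_combination (1 + N*(-1:ℝ)^(n+1)*charlier a (n+1) (-1)) * D1
    - (N*(-1:ℝ)^(n+1)*charlier a (n+1) 0) * D2
    + (N*(-1:ℝ)^(n+1)*charlier a (n+1) 0) * P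

lemma fdiff_iter_genCharlier_vanish (a N : ℝ) (n j : ℕ) :
    fdiff^[n + j + 1] (genCharlier a N n) = fun _ => 0 := by
  rw [genCharlier_eq_psi]
  have h1 : n + j + 1 = (j + 1) + n := by omega
  rw [h1, Function.iterate_add_apply]
  have h2 := fdiff_iter_psi a (1 + N * (-1)^n * charlier a n (-1)) (N * (-1)^n * charlier a n 0) n 0
  rw [zero_add] at h2
  rw [h2, fdiff_iter_psi_zero]

lemma fdiff_iter_genCharlier (a N : ℝ) (m i : ℕ) :
    fdiff^[i] (genCharlier a N (m+i))
      = psiFun a (1 + N * (-1)^(m+i) * charlier a (m+i) (-1))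
          (N * (-1)^(m+i) * charlier a (m+i) 0) m := by
  rw [genCharlier_eq_psi, fdiff_iter_psi]

/-- Uniqueness of the coefficients in the difference equation: if coefficients
`B_0(n)` and `B_i(x)` (`i ≥ 1`) make every `y = C_n^{a,N}` satisfy
`N B_0(n) y(x) + N ∑_{i=1}^∞ B_i(x) Δ^i y(x) + x Δ∇y(x) + (a-x) Δy(x) + n y(x) = 0`,
then `B_0(n) = (-1)^{n-1} C_{n-1}^{(a)}(-2)` and `B_i(x) = A_i(x)` for all `i ≥ 1`. -/
theorem genCharlier_difference_equation_unique (a : ℝ) (ha : 0 < a)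
    (B0 : ℕ → ℝ) (B : ℕ → ℝ → ℝ)
    (h : ∀ (n : ℕ) (N : ℝ), 0 < N → ∀ x : ℝ,
      N * B0 n * genCharlier a N n x
        + N * ∑' i : ℕ, B (i + 1) x * fdiff^[i + 1] (genCharlier a N n) x
        + x * fdiff (bdiff (genCharlier a N n)) x
        + (a - x) * fdiff (genCharlier a N n) x
        + (n : ℝ) * genCharlier a N n x = 0) :
    (∀ n : ℕ, B0 n = A0coef a n) ∧ (∀ i : ℕ, 1 ≤ i → ∀ x : ℝ, B i x = Acoef a i x) := by
  have main : ∀ n : ℕ, B0 n = A0coef a n ∧ (n ≠ 0 → ∀ x : ℝ, B n x = Acoef a n x) := by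
    intro n
    induction n using Nat.strong_induction_on with
    | _ n IH =>
    match n with
    | 0 =>
      refine ⟨?_, fun hn => absurd rfl hn⟩
      have hg : genCharlier a 1 0 = fun _ : ℝ => (1:ℝ) := by
        funext x
        unfold genCharlier
        rw [charlier_zero, charlier_zero, charlier_zero, charlier_zero]
        ring
      have H := h 0 1 one_pos 0
      have h1 : fdiff (fun _ : ℝ => (1:ℝ)) = fun _ => 0 := funext fun x => sub_self 1
      have h2 : bdiff (fun _ : ℝ => (1:ℝ)) = fun _ => 0 := funext fun x => sub_self 1
      have h3 : ∀ i : ℕ, fdiff^[i+1] (fun _ : ℝ => (1:ℝ)) = fun _ => 0 := fun i => by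
        rw [Function.iterate_succ_apply, h1, fdiff_iter_zero]
      rw [hg, h2, fdiff_zero_fun] at H
      simp only [h3] at H
      simp only [h1] at H
      rw [A0coef_zero]
      simpa using H
    | (n+1) =>
      -- the two extracted equations, for every x
      have key : ∀ x : ℝ, ∀ N : ℝ, 0 < N →
          N * (B0 (n+1) * charlier a (n+1) x
              + (∑ i ∈ Finset.range (n+1), B (i+1) x * charlier a (n-i) x)
              + (-1:ℝ)^(n+1) * charlier a (n+1) 0 * charlier a n (x-2))
          + N^2 * (B0 (n+1) * ((-1:ℝ)^(n+1) * charlier a (n+1) (-1) * charlier a (n+1) x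
                - (-1:ℝ)^(n+1) * charlier a (n+1) 0 * charlier a (n+1) (x-1))
              + ∑ i ∈ Finset.range (n+1), B (i+1) x *
                  ((-1:ℝ)^(n+1) * charlier a (n+1) (-1) * charlier a (n-i) x
                    - (-1:ℝ)^(n+1) * charlier a (n+1) 0 * charlier a (n-i) (x-1))) = 0 := by
        intro x N hN
        have H := h (n+1) N hN x
        have htsum : (∑' i : ℕ, B (i+1) x * fdiff^[i+1] (genCharlier a N (n+1)) x)
            = ∑ i ∈ Finset.range (n+1), B (i+1) x * fdiff^[i+1] (genCharlier a N (n+1)) x := by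
          apply tsum_eq_sum
          intro i hi
          rw [Finset.mem_range, not_lt] at hi
          obtain ⟨j, rfl⟩ : ∃ j, i = (n+1) + j := ⟨i - (n+1), by omega⟩
          rw [fdiff_iter_genCharlier_vanish a N (n+1) j]
          show B ((n+1)+j+1) x * 0 = 0
          exact mul_zero _
        rw [htsum] at H
        have hsummand : ∀ i ∈ Finset.range (n+1),
            B (i+1) x * fdiff^[i+1] (genCharlier a N (n+1)) x
            = B (i+1) x * (charlier a (n-i) x
                + N * ((-1:ℝ)^(n+1) * charlier a (n+1) (-1) * charlier a (n-i) x
                  - (-1:ℝ)^(n+1) * charlier a (n+1) 0 * charlier a (n-i) (x-1))) := by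
          intro i hi
          rw [Finset.mem_range] at hi
          obtain ⟨m, hm⟩ : ∃ m, n - i = m := ⟨_, rfl⟩
          have hn1 : n + 1 = m + (i+1) := by omega
          rw [hm, hn1, fdiff_iter_genCharlier]
          unfold psiFun
          ring
        rw [Finset.sum_congr rfl hsummand] at H
        have HL := L0_genCharlier a N n x
        have hgc : genCharlier a N (n+1) x = charlier a (n+1) x
            + N * ((-1:ℝ)^(n+1) * charlier a (n+1) (-1) * charlier a (n+1) x
              - (-1:ℝ)^(n+1) * charlier a (n+1) 0 * charlier a (n+1) (x-1)) := by
          unfold genCharlier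
          ring
        have hsplit2 : ∑ i ∈ Finset.range (n+1), B (i+1) x * (charlier a (n-i) x
              + N * ((-1:ℝ)^(n+1) * charlier a (n+1) (-1) * charlier a (n-i) x
                - (-1:ℝ)^(n+1) * charlier a (n+1) 0 * charlier a (n-i) (x-1)))
            = (∑ i ∈ Finset.range (n+1), B (i+1) x * charlier a (n-i) x)
              + N * ∑ i ∈ Finset.range (n+1), B (i+1) x *
                  ((-1:ℝ)^(n+1) * charlier a (n+1) (-1) * charlier a (n-i) x
                    - (-1:ℝ)^(n+1) * charlier a (n+1) 0 * charlier a (n-i) (x-1)) := by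
          rw [Finset.mul_sum, ← Finset.sum_add_distrib]
          exact Finset.sum_congr rfl fun i _ => by ring
        push_cast at H
        linear_combination H - HL - (N * B0 (n+1)) * hgc - N * hsplit2
      have E12 : ∀ x : ℝ,
          (B0 (n+1) * charlier a (n+1) x
              + (∑ i ∈ Finset.range (n+1), B (i+1) x * charlier a (n-i) x)
              + (-1:ℝ)^(n+1) * charlier a (n+1) 0 * charlier a n (x-2) = 0)
          ∧ (B0 (n+1) * ((-1:ℝ)^(n+1) * charlier a (n+1) (-1) * charlier a (n+1) x
                - (-1:ℝ)^(n+1) * charlier a (n+1) 0 * charlier a (n+1) (x-1))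
              + ∑ i ∈ Finset.range (n+1), B (i+1) x *
                  ((-1:ℝ)^(n+1) * charlier a (n+1) (-1) * charlier a (n-i) x
                    - (-1:ℝ)^(n+1) * charlier a (n+1) 0 * charlier a (n-i) (x-1)) = 0) := by
        intro x
        have k1 := key x 1 one_pos
        have k2 := key x 2 (by norm_num)
        norm_num at k1 k2
        constructor
        · linarith
        · linarith
      have IHB : ∀ i ∈ Finset.range n, ∀ x : ℝ, B (i+1) x = Acoef a (i+1) x := by
        intro i hi x
        rw [Finset.mem_range] at hi
        exact (IH (i+1) (by omega)).2 (Nat.succ_ne_zero i) x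
      have hdiff1 : ∀ x : ℝ, (B0 (n+1) - A0coef a (n+1)) * charlier a (n+1) x
          + (B (n+1) x - Acoef a (n+1) x) = 0 := by
        intro x
        have e1 := (E12 x).1
        have i2 := id2 a n x
        have hsg : ∑ i ∈ Finset.range (n+1), B (i+1) x * charlier a (n-i) x
            = (∑ i ∈ Finset.range n, Acoef a (i+1) x * charlier a (n-i) x) + B (n+1) x := by
          rw [Finset.sum_range_succ, Nat.sub_self, charlier_zero, mul_one]
          congr 1
          exact Finset.sum_congr rfl fun i hi => by rw [IHB i hi x]
        have hsa : ∑ i ∈ Finset.range (n+1), Acoef a (i+1) x * charlier a (n-i) x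
            = (∑ i ∈ Finset.range n, Acoef a (i+1) x * charlier a (n-i) x) + Acoef a (n+1) x := by
          rw [Finset.sum_range_succ, Nat.sub_self, charlier_zero, mul_one]
        linear_combination e1 - i2 - hsg + hsa
      have hdiff2 : ∀ x : ℝ, (B0 (n+1) - A0coef a (n+1)) *
            ((-1:ℝ)^(n+1) * charlier a (n+1) (-1) * charlier a (n+1) x
              - (-1:ℝ)^(n+1) * charlier a (n+1) 0 * charlier a (n+1) (x-1))
          + (B (n+1) x - Acoef a (n+1) x) *
            ((-1:ℝ)^(n+1) * charlier a (n+1) (-1) - (-1:ℝ)^(n+1) * charlier a (n+1) 0) = 0 := by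
        intro x
        have e2 := (E12 x).2
        have i1 := id1 a n x
        have hsg : ∑ i ∈ Finset.range (n+1), B (i+1) x *
              ((-1:ℝ)^(n+1) * charlier a (n+1) (-1) * charlier a (n-i) x
                - (-1:ℝ)^(n+1) * charlier a (n+1) 0 * charlier a (n-i) (x-1))
            = (∑ i ∈ Finset.range n, Acoef a (i+1) x *
                ((-1:ℝ)^(n+1) * charlier a (n+1) (-1) * charlier a (n-i) x
                  - (-1:ℝ)^(n+1) * charlier a (n+1) 0 * charlier a (n-i) (x-1)))
              + B (n+1) x * ((-1:ℝ)^(n+1) * charlier a (n+1) (-1)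
                  - (-1:ℝ)^(n+1) * charlier a (n+1) 0) := by
          rw [Finset.sum_range_succ, Nat.sub_self, charlier_zero, charlier_zero]
          rw [mul_one, mul_one]
          congr 1
          exact Finset.sum_congr rfl fun i hi => by rw [IHB i hi x]
        have hsa : ∑ i ∈ Finset.range (n+1), Acoef a (i+1) x *
              ((-1:ℝ)^(n+1) * charlier a (n+1) (-1) * charlier a (n-i) x
                - (-1:ℝ)^(n+1) * charlier a (n+1) 0 * charlier a (n-i) (x-1))
            = (∑ i ∈ Finset.range n, Acoef a (i+1) x *
                ((-1:ℝ)^(n+1) * charlier a (n+1) (-1) * charlier a (n-i) x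
                  - (-1:ℝ)^(n+1) * charlier a (n+1) 0 * charlier a (n-i) (x-1)))
              + Acoef a (n+1) x * ((-1:ℝ)^(n+1) * charlier a (n+1) (-1)
                  - (-1:ℝ)^(n+1) * charlier a (n+1) 0) := by
          rw [Finset.sum_range_succ, Nat.sub_self, charlier_zero, charlier_zero]
          rw [mul_one, mul_one]
        linear_combination e2 - i1 - hsg + hsa
      -- evaluate at x = 1 and eliminate
      have h1 := hdiff1 1
      have h2 := hdiff2 1
      rw [show (1:ℝ)-1 = 0 by norm_num] at h2
      have hP1 := charlier_pascal' a n 1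
      rw [show (1:ℝ)-1 = 0 by norm_num] at hP1
      have hzero : (B0 (n+1) - A0coef a (n+1)) *
          ((-1:ℝ)^(n+1) * charlier a (n+1) 0 * charlier a n 0) = 0 := by
        linear_combination h2
          - ((-1:ℝ)^(n+1) * charlier a (n+1) (-1) - (-1:ℝ)^(n+1) * charlier a (n+1) 0) * h1
          - ((B0 (n+1) - A0coef a (n+1)) * ((-1:ℝ)^(n+1) * charlier a (n+1) 0)) * hP1
      have hne : ((-1:ℝ)^(n+1) * charlier a (n+1) 0 * charlier a n 0) ≠ 0 := by
        have ha' : (-a) ≠ 0 := neg_ne_zero.mpr (ne_of_gt ha)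
        apply mul_ne_zero
        apply mul_ne_zero
        · exact pow_ne_zero _ (by norm_num)
        · rw [charlier_at_zero]
          exact div_ne_zero (pow_ne_zero _ ha')
            (Nat.cast_ne_zero.mpr (Nat.factorial_ne_zero _))
        · rw [charlier_at_zero]
          exact div_ne_zero (pow_ne_zero _ ha')
            (Nat.cast_ne_zero.mpr (Nat.factorial_ne_zero _))
      have hd0 : B0 (n+1) = A0coef a (n+1) := by
        rcases mul_eq_zero.mp hzero with h' | h'
        · exact sub_eq_zero.mp h'
        · exact absurd h' hne
      refine ⟨hd0, fun _ x => ?_⟩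
      have hx := hdiff1 x
      rw [hd0, sub_self, zero_mul, zero_add] at hx
      exact sub_eq_zero.mp hx
  exact ⟨fun n => (main n).1, fun i hi x => (main i).2 (by omega) x⟩
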